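/- Let X be a topological space and k a field. Suppose u₁,…,u_m, w₁,…,w_m ∈ H¹(X; k) are degree-one cohomology classes satisfying u_i ∪ w_j = 0 for all i, j = 1,…,m, and such that the cup products u₁∪⋯∪u_m and w₁∪⋯∪w_m are linearly independent elements of H^m(X; k). Then the product (1⊗u₁ − u₁⊗1)⋯(1⊗u_m − u_m⊗1)(1⊗w₁ − w₁⊗1)⋯(1⊗w_m − w_m⊗1) is a nonzero element of the graded tensor product algebra H*(X; k) ⊗ H*(X; k). -/

import Mathlib

open TensorProduct GradedTensorProduct

section Aux
variable {k : Type*} [Field k] {A : Type*} [Ring A] [Algebra k A]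
variable (𝒜 : ℕ → Submodule k A) [GradedAlgebra 𝒜]

-- products of degree-1 elements
lemma prod_mem_graded (l : List A) (h : ∀ x ∈ l, x ∈ 𝒜 1) : l.prod ∈ 𝒜 l.length := by
  classical
  have := SetLike.list_prod_map_mem_graded (A := 𝒜) l (fun _ => 1) id (fun j hj => h j hj)
  simpa using this

lemma prod_kill (l : List A) (c : A) (hl : l ≠ []) (h : ∀ x ∈ l, x * c = 0) :
    l.prod * c = 0 := by
  induction l with
  | nil => simp at hl
  | cons x t ih =>
    rcases eq_or_ne t [] with rfl | ht
    · simpa using h x (by simp)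
    · rw [List.prod_cons, mul_assoc, ih ht fun y hy => h y (List.mem_cons_of_mem _ hy), mul_zero]


/-- Submodule of the graded tensor product spanned by homogeneous tensors both of
whose factors annihilate every element of `W` on the left. -/
noncomputable def killSub (W : Set A) : Submodule k (𝒜 ᵍ⊗[k] 𝒜) :=
  Submodule.span k {z | ∃ x y i j, x ∈ 𝒜 i ∧ y ∈ 𝒜 j ∧ (∀ c ∈ W, x * c = 0) ∧
    (∀ c ∈ W, y * c = 0) ∧ z = x ᵍ⊗ₜ[k] y}

lemma mem_killSub {W : Set A} {x y : A} {i j : ℕ} (hx : x ∈ 𝒜 i) (hy : y ∈ 𝒜 j)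
    (hxW : ∀ c ∈ W, x * c = 0) (hyW : ∀ c ∈ W, y * c = 0) :
    (x ᵍ⊗ₜ[k] y : 𝒜 ᵍ⊗[k] 𝒜) ∈ killSub 𝒜 W :=
  Submodule.subset_span ⟨x, y, i, j, hx, hy, hxW, hyW, rfl⟩

lemma gtmul_zero (x : A) : (x ᵍ⊗ₜ[k] (0:A) : 𝒜 ᵍ⊗[k] 𝒜) = 0 := by
  show of k 𝒜 𝒜 (x ⊗ₜ 0) = 0
  rw [TensorProduct.tmul_zero, map_zero]

lemma zero_gtmul (y : A) : ((0:A) ᵍ⊗ₜ[k] y : 𝒜 ᵍ⊗[k] 𝒜) = 0 := by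
  show of k 𝒜 𝒜 (0 ⊗ₜ y) = 0
  rw [TensorProduct.zero_tmul, map_zero]

lemma upow_smul' {M : Type*} [AddCommGroup M] [Module k M] (e : ℕ) (z : M) :
    ((-1:ℤˣ)^e : ℤˣ) • z = ((-1:k)^e) • z := by
  rw [Units.smul_def]; push_cast; rw [← Int.cast_smul_eq_zsmul k]; push_cast; ring_nf

/-- `killSub` is killed by right multiplication by `1 ⊗ w - w ⊗ 1` for `w ∈ W` of degree 1. -/
lemma killSub_mul_beta {W : Set A} {w₀ : A} (hw₀ : w₀ ∈ 𝒜 1) (hW : w₀ ∈ W)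
    {ν : 𝒜 ᵍ⊗[k] 𝒜} (hν : ν ∈ killSub 𝒜 W) :
    ν * ((1:A) ᵍ⊗ₜ[k] w₀ - w₀ ᵍ⊗ₜ[k] (1:A)) = 0 := by
  have : killSub 𝒜 W ≤ LinearMap.ker
      (LinearMap.mulRight k ((1:A) ᵍ⊗ₜ[k] w₀ - w₀ ᵍ⊗ₜ[k] (1:A) : 𝒜 ᵍ⊗[k] 𝒜)) := by
    rw [killSub, Submodule.span_le]
    rintro _ ⟨x, y, i, j, hx, hy, hxW, hyW, rfl⟩
    simp only [SetLike.mem_coe, LinearMap.mem_ker, LinearMap.mulRight_apply]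
    rw [mul_sub]
    have h1 : (x ᵍ⊗ₜ[k] y : 𝒜 ᵍ⊗[k] 𝒜) * (1:A) ᵍ⊗ₜ[k] w₀ = x ᵍ⊗ₜ[k] (y * w₀) :=
      tmul_coe_mul_one_tmul 𝒜 𝒜 x ⟨y, hy⟩ w₀
    have h2 : (x ᵍ⊗ₜ[k] y : 𝒜 ᵍ⊗[k] 𝒜) * w₀ ᵍ⊗ₜ[k] (1:A)
        = (-1:ℤˣ)^(j * 1) • ((x * w₀) ᵍ⊗ₜ[k] (y * 1)) :=
      tmul_coe_mul_coe_tmul 𝒜 𝒜 x ⟨y, hy⟩ ⟨w₀, hw₀⟩ (1:A)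
    rw [h1, h2, hyW w₀ hW, hxW w₀ hW]
    rw [gtmul_zero, zero_gtmul, smul_zero, sub_zero]
  simpa using LinearMap.mem_ker.mp (this hν)

/-- `killSub` is stable under left multiplication by `1 ⊗ x₀ - x₀ ⊗ 1` when `x₀` has
degree 1 and annihilates `W`. -/
lemma alpha_mul_killSub {W : Set A} {x₀ : A} (hx₀ : x₀ ∈ 𝒜 1)
    {ν : 𝒜 ᵍ⊗[k] 𝒜} (hν : ν ∈ killSub 𝒜 W) :
    ((1:A) ᵍ⊗ₜ[k] x₀ - x₀ ᵍ⊗ₜ[k] (1:A)) * ν ∈ killSub 𝒜 W := by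
  have key : killSub 𝒜 W ≤ (killSub 𝒜 W).comap
      (LinearMap.mulLeft k ((1:A) ᵍ⊗ₜ[k] x₀ - x₀ ᵍ⊗ₜ[k] (1:A) : 𝒜 ᵍ⊗[k] 𝒜)) := by
    rw [killSub, Submodule.span_le]
    rintro _ ⟨x, y, i, j, hx, hy, hxW, hyW, rfl⟩
    simp only [SetLike.mem_coe, Submodule.mem_comap, LinearMap.mulLeft_apply]
    rw [sub_mul]
    have h1 : ((1:A) ᵍ⊗ₜ[k] x₀ : 𝒜 ᵍ⊗[k] 𝒜) * x ᵍ⊗ₜ[k] y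
        = (-1:ℤˣ)^(1 * i) • (((1:A) * x) ᵍ⊗ₜ[k] (x₀ * y)) :=
      tmul_coe_mul_coe_tmul 𝒜 𝒜 1 ⟨x₀, hx₀⟩ ⟨x, hx⟩ y
    have h2 : (x₀ ᵍ⊗ₜ[k] (1:A) : 𝒜 ᵍ⊗[k] 𝒜) * x ᵍ⊗ₜ[k] y = (x₀ * x) ᵍ⊗ₜ[k] y :=
      tmul_one_mul_coe_tmul 𝒜 𝒜 x₀ ⟨x, hx⟩ y
    rw [h1, h2, upow_smul' (k := k), one_mul, one_mul]
    refine sub_mem (Submodule.smul_mem _ _ ?_) ?_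
    · exact mem_killSub 𝒜 hx (SetLike.mul_mem_graded hx₀ hy) hxW
        (fun c hc => by rw [mul_assoc, hyW c hc, mul_zero])
    · exact mem_killSub 𝒜 (SetLike.mul_mem_graded hx₀ hx) hy
        (fun c hc => by rw [mul_assoc, hxW c hc, mul_zero]) hyW
  exact key hν

end Aux

section Aux2
variable {k : Type*} [Field k] {A : Type*} [Ring A] [Algebra k A]
variable (𝒜 : ℕ → Submodule k A) [GradedAlgebra 𝒜]

/-- Expansion of the product of the zero-divisors `1 ⊗ x - x ⊗ 1` modulo `killSub`. -/
lemma expandU (W : Set A) :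
    ∀ (l : List A), l ≠ [] → (∀ x ∈ l, x ∈ 𝒜 1) → (∀ x ∈ l, ∀ c ∈ W, x * c = 0) →
    ∃ ν ∈ killSub 𝒜 W,
      (l.map fun x => ((1:A) ᵍ⊗ₜ[k] x - x ᵍ⊗ₜ[k] (1:A) : 𝒜 ᵍ⊗[k] 𝒜)).prod
        = (-1:k)^l.length • (l.prod ᵍ⊗ₜ[k] (1:A)) + (1:A) ᵍ⊗ₜ[k] l.prod + ν := by
  intro l
  induction l with
  | nil => intro h; exact absurd rfl h
  | cons x t ih =>
    intro _ h1 h0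
    rcases eq_or_ne t [] with rfl | ht
    · refine ⟨0, Submodule.zero_mem _, ?_⟩
      simp only [List.map_cons, List.map_nil, List.prod_cons, List.prod_nil, mul_one,
        List.length_cons, List.length_nil, zero_add, pow_one, neg_smul, one_smul, add_zero]
      abel
    · obtain ⟨ν, hν, hexp⟩ := ih ht (fun y hy => h1 y (List.mem_cons_of_mem _ hy))
        (fun y hy => h0 y (List.mem_cons_of_mem _ hy))
      have hx1 : x ∈ 𝒜 1 := h1 x (List.mem_cons_self)
      have hxW : ∀ c ∈ W, x * c = 0 := h0 x (List.mem_cons_self)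
      have hp : t.prod ∈ 𝒜 t.length :=
        prod_mem_graded 𝒜 t (fun y hy => h1 y (List.mem_cons_of_mem _ hy))
      have hpW : ∀ c ∈ W, t.prod * c = 0 := fun c hc =>
        prod_kill t c ht (fun y hy => h0 y (List.mem_cons_of_mem _ hy) c hc)
      -- four product computations
      have e1 : ((1:A) ᵍ⊗ₜ[k] x : 𝒜 ᵍ⊗[k] 𝒜) * t.prod ᵍ⊗ₜ[k] (1:A)
          = (-1:k)^(t.length) • (t.prod ᵍ⊗ₜ[k] x) := by
        have := tmul_coe_mul_coe_tmul 𝒜 𝒜 1 ⟨x, hx1⟩ ⟨t.prod, hp⟩ (1:A)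
        rw [this, upow_smul' (k := k), one_mul, one_mul, mul_one]
      have e2 : (x ᵍ⊗ₜ[k] (1:A) : 𝒜 ᵍ⊗[k] 𝒜) * t.prod ᵍ⊗ₜ[k] (1:A)
          = (x * t.prod) ᵍ⊗ₜ[k] (1:A) :=
        tmul_one_mul_coe_tmul 𝒜 𝒜 x ⟨t.prod, hp⟩ (1:A)
      have e3 : ((1:A) ᵍ⊗ₜ[k] x : 𝒜 ᵍ⊗[k] 𝒜) * (1:A) ᵍ⊗ₜ[k] t.prod
          = (1:A) ᵍ⊗ₜ[k] (x * t.prod) :=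
        tmul_coe_mul_one_tmul 𝒜 𝒜 1 ⟨x, hx1⟩ t.prod
      have e4 : (x ᵍ⊗ₜ[k] (1:A) : 𝒜 ᵍ⊗[k] 𝒜) * (1:A) ᵍ⊗ₜ[k] t.prod
          = x ᵍ⊗ₜ[k] t.prod :=
        tmul_one_mul_one_tmul 𝒜 𝒜 x t.prod
      refine ⟨(-1:k)^(t.length + t.length) • (t.prod ᵍ⊗ₜ[k] x) - x ᵍ⊗ₜ[k] t.prod
          + ((1:A) ᵍ⊗ₜ[k] x - x ᵍ⊗ₜ[k] (1:A)) * ν, ?_, ?_⟩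
      · exact add_mem (sub_mem (Submodule.smul_mem _ _
            (mem_killSub 𝒜 hp hx1 hpW hxW))
            (mem_killSub 𝒜 hx1 hp hxW hpW))
          (alpha_mul_killSub 𝒜 hx1 hν)
      · rw [List.map_cons, List.prod_cons, hexp]
        rw [mul_add, mul_add, mul_smul_comm, sub_mul, sub_mul, sub_mul, e1, e2, e3, e4]
        rw [List.prod_cons, List.length_cons, pow_succ]
        rw [smul_sub]
        rw [smul_smul, ← pow_add]
        module

/-- Multiply `a ⊗ b` (with `a` annihilating each list element) on the right by the
product of the zero-divisors of list elements: only the right factor grows. -/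
lemma mulBetaRight :
    ∀ (l : List A), (∀ x ∈ l, x ∈ 𝒜 1) → ∀ (a b : A) (j : ℕ), b ∈ 𝒜 j →
      (∀ x ∈ l, a * x = 0) →
    (a ᵍ⊗ₜ[k] b : 𝒜 ᵍ⊗[k] 𝒜) *
        (l.map fun x => ((1:A) ᵍ⊗ₜ[k] x - x ᵍ⊗ₜ[k] (1:A) : 𝒜 ᵍ⊗[k] 𝒜)).prod
      = a ᵍ⊗ₜ[k] (b * l.prod) := by
  intro l
  induction l with
  | nil => intro _ a b j _ _; simp
  | cons x t ih =>
    intro h1 a b j hb ha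
    have hx1 : x ∈ 𝒜 1 := h1 x (List.mem_cons_self)
    rw [List.map_cons, List.prod_cons, ← mul_assoc]
    have e1 : (a ᵍ⊗ₜ[k] b : 𝒜 ᵍ⊗[k] 𝒜) * ((1:A) ᵍ⊗ₜ[k] x - x ᵍ⊗ₜ[k] (1:A))
        = a ᵍ⊗ₜ[k] (b * x) := by
      rw [mul_sub, tmul_coe_mul_one_tmul 𝒜 𝒜 a ⟨b, hb⟩ x,
        tmul_coe_mul_coe_tmul 𝒜 𝒜 a ⟨b, hb⟩ ⟨x, hx1⟩ (1:A),
        ha x (List.mem_cons_self), zero_gtmul, smul_zero, sub_zero]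
    rw [e1, ih (fun y hy => h1 y (List.mem_cons_of_mem _ hy)) a (b * x) (j + 1)
      (SetLike.mul_mem_graded hb hx1) (fun y hy => ha y (List.mem_cons_of_mem _ hy)),
      List.prod_cons, mul_assoc]

/-- Multiply `x ⊗ a` (with homogeneous `a` annihilating each list element) on the right by
the product of the zero-divisors: only the left factor grows, with a sign. -/
lemma mulBetaLeft :
    ∀ (l : List A), (∀ y ∈ l, y ∈ 𝒜 1) → ∀ (a : A) (d : ℕ), a ∈ 𝒜 d →
      (∀ y ∈ l, a * y = 0) → ∀ x : A,
    (x ᵍ⊗ₜ[k] a : 𝒜 ᵍ⊗[k] 𝒜) *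
        (l.map fun y => ((1:A) ᵍ⊗ₜ[k] y - y ᵍ⊗ₜ[k] (1:A) : 𝒜 ᵍ⊗[k] 𝒜)).prod
      = ((-1:k)^((d+1) * l.length)) • ((x * l.prod) ᵍ⊗ₜ[k] a) := by
  intro l
  induction l with
  | nil => intro _ a d _ _ x; simp
  | cons y t ih =>
    intro h1 a d hd ha x
    have hy1 : y ∈ 𝒜 1 := h1 y (List.mem_cons_self)
    rw [List.map_cons, List.prod_cons, ← mul_assoc]
    have e1 : (x ᵍ⊗ₜ[k] a : 𝒜 ᵍ⊗[k] 𝒜) * ((1:A) ᵍ⊗ₜ[k] y - y ᵍ⊗ₜ[k] (1:A))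
        = ((-1:k)^(d+1)) • ((x * y) ᵍ⊗ₜ[k] a) := by
      rw [mul_sub, tmul_coe_mul_one_tmul 𝒜 𝒜 x ⟨a, hd⟩ y,
        ha y (List.mem_cons_self), gtmul_zero,
        tmul_coe_mul_coe_tmul 𝒜 𝒜 x ⟨a, hd⟩ ⟨y, hy1⟩ (1:A),
        upow_smul' (k := k), mul_one, mul_one, zero_sub, pow_succ, ← neg_smul]
      ring_nf
    rw [e1, smul_mul_assoc, ih (fun z hz => h1 z (List.mem_cons_of_mem _ hz)) a d hd
      (fun z hz => ha z (List.mem_cons_of_mem _ hz)) (x * y),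
      smul_smul, ← pow_add, List.prod_cons, List.length_cons, ← mul_assoc]
    ring_nf

end Aux2


/-- (Lemma on zero-divisors.)  Let `A = H^*(X; k)` be a graded-commutative algebra
over a field `k` (modelling the singular cohomology algebra of a space `X`), and let
`u₁,…,u_m, w₁,…,w_m` be degree-one classes with `u_i ∪ w_j = 0` for all `i, j` and
such that the cup products `u₁⋯u_m` and `w₁⋯w_m` are linearly independent in degree `m`.
Then the product `(1⊗u₁ − u₁⊗1)⋯(1⊗u_m − u_m⊗1)(1⊗w₁ − w₁⊗1)⋯(1⊗w_m − w_m⊗1)` is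
a nonzero element of the graded (sign-commutative) tensor product `A ⊗ A`. -/
theorem prod_zero_divisors_ne_zero
    (k : Type*) [Field k] (A : Type*) [Ring A] [Algebra k A]
    (𝒜 : ℕ → Submodule k A) [GradedAlgebra 𝒜]
    (hcomm : ∀ (i j : ℕ) (a b : A), a ∈ 𝒜 i → b ∈ 𝒜 j →
      a * b = ((-1 : ℤ) ^ (i * j)) • (b * a))
    (m : ℕ) (u w : Fin m → A)
    (hu : ∀ i, u i ∈ 𝒜 1) (hw : ∀ j, w j ∈ 𝒜 1)
    (huw : ∀ i j, u i * w j = 0)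
    (hind : LinearIndependent k ![(List.ofFn u).prod, (List.ofFn w).prod]) :
    (List.ofFn fun i => ((1 : A) ᵍ⊗ₜ[k] u i - u i ᵍ⊗ₜ[k] (1 : A) : 𝒜 ᵍ⊗[k] 𝒜)).prod *
    (List.ofFn fun j => ((1 : A) ᵍ⊗ₜ[k] w j - w j ᵍ⊗ₜ[k] (1 : A) : 𝒜 ᵍ⊗[k] 𝒜)).prod
      ≠ 0 := by
  classical
  rcases Nat.eq_zero_or_pos m with rfl | hm
  · exfalso
    have h01 : (![(List.ofFn u).prod, (List.ofFn w).prod]) 0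
        = (![(List.ofFn u).prod, (List.ofFn w).prod]) 1 := by
      simp [List.ofFn_zero]
    exact absurd (hind.injective h01) (by decide)
  have hlu_ne : List.ofFn u ≠ [] := by
    intro h; have := congrArg List.length h; simp at this; omega
  have h1u : ∀ x ∈ List.ofFn u, x ∈ 𝒜 1 := by
    intro x hx; obtain ⟨i, rfl⟩ := List.mem_ofFn.mp hx; exact hu i
  have h1w : ∀ x ∈ List.ofFn w, x ∈ 𝒜 1 := by
    intro x hx; obtain ⟨i, rfl⟩ := List.mem_ofFn.mp hx; exact hw i
  have h0u : ∀ x ∈ List.ofFn u, ∀ c ∈ Set.range w, x * c = 0 := by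
    rintro x hx c ⟨j, rfl⟩
    obtain ⟨i, rfl⟩ := List.mem_ofFn.mp hx
    exact huw i j
  have hupW : ∀ c ∈ Set.range w, (List.ofFn u).prod * c = 0 := fun c hc =>
    prod_kill _ c hlu_ne (fun x hx => h0u x hx c hc)
  have hupW' : ∀ x ∈ List.ofFn w, (List.ofFn u).prod * x = 0 := by
    intro x hx
    obtain ⟨i, rfl⟩ := List.mem_ofFn.mp hx
    exact hupW _ (Set.mem_range_self i)
  have hup : (List.ofFn u).prod ∈ 𝒜 (List.ofFn u).length := prod_mem_graded 𝒜 _ h1u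
  have hmapu : (List.ofFn fun i => ((1 : A) ᵍ⊗ₜ[k] u i - u i ᵍ⊗ₜ[k] (1 : A) : 𝒜 ᵍ⊗[k] 𝒜))
      = (List.ofFn u).map fun x => ((1:A) ᵍ⊗ₜ[k] x - x ᵍ⊗ₜ[k] (1:A) : 𝒜 ᵍ⊗[k] 𝒜) := by
    rw [List.map_ofFn]; rfl
  have hmapw : (List.ofFn fun j => ((1 : A) ᵍ⊗ₜ[k] w j - w j ᵍ⊗ₜ[k] (1 : A) : 𝒜 ᵍ⊗[k] 𝒜))
      = (List.ofFn w).map fun x => ((1:A) ᵍ⊗ₜ[k] x - x ᵍ⊗ₜ[k] (1:A) : 𝒜 ᵍ⊗[k] 𝒜) := by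
    rw [List.map_ofFn]; rfl
  rw [hmapu, hmapw]
  obtain ⟨ν, hν, hexp⟩ := expandU 𝒜 (Set.range w) (List.ofFn u) hlu_ne h1u h0u
  have hT1 : ((List.ofFn u).prod ᵍ⊗ₜ[k] (1:A) : 𝒜 ᵍ⊗[k] 𝒜) *
      ((List.ofFn w).map fun x => ((1:A) ᵍ⊗ₜ[k] x - x ᵍ⊗ₜ[k] (1:A) : 𝒜 ᵍ⊗[k] 𝒜)).prod
      = (List.ofFn u).prod ᵍ⊗ₜ[k] (List.ofFn w).prod := by
    rw [mulBetaRight 𝒜 (List.ofFn w) h1w _ 1 0 (SetLike.one_mem_graded 𝒜) hupW', one_mul]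
  have hT2 : ((1:A) ᵍ⊗ₜ[k] (List.ofFn u).prod : 𝒜 ᵍ⊗[k] 𝒜) *
      ((List.ofFn w).map fun x => ((1:A) ᵍ⊗ₜ[k] x - x ᵍ⊗ₜ[k] (1:A) : 𝒜 ᵍ⊗[k] 𝒜)).prod
      = (List.ofFn w).prod ᵍ⊗ₜ[k] (List.ofFn u).prod := by
    rw [mulBetaLeft 𝒜 (List.ofFn w) h1w _ (List.ofFn u).length hup hupW' 1, one_mul]
    have hev : Even (((List.ofFn u).length + 1) * (List.ofFn w).length) := by
      simp only [List.length_ofFn]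
      rw [Nat.mul_comm]
      exact Nat.even_mul_succ_self m
    rw [hev.neg_one_pow, one_smul]
  have hT3 : ν *
      ((List.ofFn w).map fun x => ((1:A) ᵍ⊗ₜ[k] x - x ᵍ⊗ₜ[k] (1:A) : 𝒜 ᵍ⊗[k] 𝒜)).prod
      = 0 := by
    obtain ⟨n, rfl⟩ : ∃ n, m = n + 1 := ⟨m - 1, by omega⟩
    rw [List.ofFn_succ, List.map_cons, List.prod_cons, ← mul_assoc,
      killSub_mul_beta 𝒜 (hw 0) (Set.mem_range_self 0) hν, zero_mul]
  have hZ : (((List.ofFn u).map fun x =>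
        ((1:A) ᵍ⊗ₜ[k] x - x ᵍ⊗ₜ[k] (1:A) : 𝒜 ᵍ⊗[k] 𝒜)).prod) *
      (((List.ofFn w).map fun x =>
        ((1:A) ᵍ⊗ₜ[k] x - x ᵍ⊗ₜ[k] (1:A) : 𝒜 ᵍ⊗[k] 𝒜)).prod)
      = (-1:k)^(List.ofFn u).length • ((List.ofFn u).prod ᵍ⊗ₜ[k] (List.ofFn w).prod)
        + (List.ofFn w).prod ᵍ⊗ₜ[k] (List.ofFn u).prod := by
    rw [hexp, add_mul, add_mul, smul_mul_assoc, hT1, hT2, hT3, add_zero]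
  rw [hZ]
  -- dual functionals from linear independence
  have hne : (List.ofFn u).prod ≠ (List.ofFn w).prod := by
    intro h
    have h01 : (![(List.ofFn u).prod, (List.ofFn w).prod]) 0
        = (![(List.ofFn u).prod, (List.ofFn w).prod]) 1 := by simpa using h
    exact absurd (hind.injective h01) (by decide)
  have hr : LinearIndepOn k id (Set.range ![(List.ofFn u).prod, (List.ofFn w).prod]) :=
    (linearIndepOn_id_range_iff hind.injective).mpr hind
  have huPs : (List.ofFn u).prod ∈ hr.extend (Set.subset_univ _) :=
    hr.subset_extend _ ⟨0, rfl⟩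
  have hwPs : (List.ofFn w).prod ∈ hr.extend (Set.subset_univ _) :=
    hr.subset_extend _ ⟨1, rfl⟩
  set B : Module.Basis (hr.extend (Set.subset_univ _)) k A := Module.Basis.extend hr with hB
  set f : A →ₗ[k] k := B.coord ⟨(List.ofFn w).prod, hwPs⟩ with hf
  set g : A →ₗ[k] k := B.coord ⟨(List.ofFn u).prod, huPs⟩ with hg
  have hidx : (⟨(List.ofFn u).prod, huPs⟩ : hr.extend (Set.subset_univ _))
      ≠ ⟨(List.ofFn w).prod, hwPs⟩ := by
    simpa [Subtype.ext_iff] using hne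
  have hfwP : f ((List.ofFn w).prod) = 1 := by
    have h1 : B.repr (B ⟨(List.ofFn w).prod, hwPs⟩) ⟨(List.ofFn w).prod, hwPs⟩ = 1 := by
      rw [Module.Basis.repr_self, Finsupp.single_eq_same]
    rw [hf, Module.Basis.coord_apply]
    simpa [hB, Module.Basis.extend_apply_self] using h1
  have hfuP : f ((List.ofFn u).prod) = 0 := by
    have h1 : B.repr (B ⟨(List.ofFn u).prod, huPs⟩) ⟨(List.ofFn w).prod, hwPs⟩ = 0 := by
      rw [Module.Basis.repr_self, Finsupp.single_eq_of_ne hidx.symm]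
    rw [hf, Module.Basis.coord_apply]
    simpa [hB, Module.Basis.extend_apply_self] using h1
  have hguP : g ((List.ofFn u).prod) = 1 := by
    have h1 : B.repr (B ⟨(List.ofFn u).prod, huPs⟩) ⟨(List.ofFn u).prod, huPs⟩ = 1 := by
      rw [Module.Basis.repr_self, Finsupp.single_eq_same]
    rw [hg, Module.Basis.coord_apply]
    simpa [hB, Module.Basis.extend_apply_self] using h1
  set φ : (𝒜 ᵍ⊗[k] 𝒜) →ₗ[k] k :=
    ((TensorProduct.lid k k).toLinearMap ∘ₗ TensorProduct.map f g) ∘ₗ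
      ((of k 𝒜 𝒜).symm : (𝒜 ᵍ⊗[k] 𝒜) ≃ₗ[k] A ⊗[k] A).toLinearMap with hφ
  have hφtm : ∀ x y : A, φ (x ᵍ⊗ₜ[k] y) = f x * g y := by
    intro x y
    simp [hφ, TensorProduct.map_tmul, TensorProduct.lid_tmul, smul_eq_mul]
  intro hzero
  have hc : φ ((-1:k)^(List.ofFn u).length • ((List.ofFn u).prod ᵍ⊗ₜ[k] (List.ofFn w).prod)
      + (List.ofFn w).prod ᵍ⊗ₜ[k] (List.ofFn u).prod) = 0 := by
    rw [hzero, map_zero]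
  rw [map_add, map_smul, hφtm, hφtm, hfuP, hfwP, hguP, zero_mul, smul_zero, zero_add,
    one_mul] at hc
  exact one_ne_zero hc
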